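/- Let K be a nonempty set, X a real Banach space, and let f ∈ ℓ∞(K,X) with ‖f‖ = 1. Suppose that (i) there exists a point k₀ ∈ K such that ‖f(k₀)‖ = 1 and f(k) = 0 for all k ∈ K with k ≠ k₀, and (ii) f(k₀) is a (ρ₊)-left symmetric point of X. Then f is a (ρ₊)-left symmetric point of ℓ∞(K,X). -/

import Mathlib

open Filter Topology Set Metric NormedSpace
open scoped ENNReal

noncomputable section

/-- Birkhoff–James orthogonality: `x ⊥_B y` iff `‖x + t • y‖ ≥ ‖x‖` for all real `t`. -/
def BJOrth {E : Type*} [NormedAddCommGroup E] [NormedSpace ℝ E] (x y : E) : Prop :=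
  ∀ t : ℝ, ‖x‖ ≤ ‖x + t • y‖

/-- The norm derivative `ρ'₊(x,y) = ‖x‖ · lim_{t→0⁺} (‖x+ty‖-‖x‖)/t`. -/
def rhoPlus {E : Type*} [NormedAddCommGroup E] [NormedSpace ℝ E] (x y : E) : ℝ :=
  ‖x‖ * limUnder (𝓝[>] (0 : ℝ)) (fun t => (‖x + t • y‖ - ‖x‖) / t)

/-- The norm derivative `ρ'₋(x,y) = ‖x‖ · lim_{t→0⁻} (‖x+ty‖-‖x‖)/t`. -/
def rhoMinus {E : Type*} [NormedAddCommGroup E] [NormedSpace ℝ E] (x y : E) : ℝ :=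
  ‖x‖ * limUnder (𝓝[<] (0 : ℝ)) (fun t => (‖x + t • y‖ - ‖x‖) / t)

/-- The norm derivative `ρ'(x,y) = (ρ'₊(x,y) + ρ'₋(x,y))/2`. -/
def rhoDer {E : Type*} [NormedAddCommGroup E] [NormedSpace ℝ E] (x y : E) : ℝ :=
  (rhoPlus x y + rhoMinus x y) / 2

/-- `x` is an exposed point of the closed unit ball of `E`: there is a norm-one functional `f`
with `f x = 1` and `f u < 1` for every `u` in the ball with `u ≠ x`. -/
def ExposedPt {E : Type*} [NormedAddCommGroup E] [NormedSpace ℝ E] (x : E) : Prop :=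
  ‖x‖ ≤ 1 ∧ ∃ f : E →L[ℝ] ℝ, ‖f‖ = 1 ∧ f x = 1 ∧ ∀ u : E, ‖u‖ ≤ 1 → u ≠ x → f u < 1

lemma limUnder_congr'' {α β : Type*} [Nonempty β] [TopologicalSpace β] {f : Filter α}
    {g h : α → β} (H : g =ᶠ[f] h) : limUnder f g = limUnder f h := by
  simp only [limUnder]; rw [Filter.map_congr H]

lemma exists_tendsto_quot {X : Type*} [NormedAddCommGroup X] [NormedSpace ℝ X] (a b : X) :
    ∃ L : ℝ, Tendsto (fun t : ℝ => (‖a + t • b‖ - ‖a‖) / t) (𝓝[>] (0:ℝ)) (𝓝 L) := by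
  set ψ : ℝ → ℝ := fun t => ‖a + t • b‖ with hψ
  have hconv : ConvexOn ℝ univ ψ := by
    have h0 := (convexOn_norm (convex_univ (𝕜 := ℝ) (E := X))).comp_affineMap
      (AffineMap.lineMap a (a + b))
    have : (norm ∘ (AffineMap.lineMap a (a + b) : ℝ →ᵃ[ℝ] X)) = ψ := by
      funext t
      simp [hψ, AffineMap.lineMap_apply, add_comm]
    rwa [Set.preimage_univ, this] at h0
  set q : ℝ → ℝ := fun t => (‖a + t • b‖ - ‖a‖) / t with hq
  have hψ0 : ψ 0 = ‖a‖ := by simp [hψ]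
  have hqslope : ∀ t : ℝ, t ≠ 0 → q t = slope ψ 0 t := by
    intro t ht
    rw [slope_def_field]
    simp [hq, hψ, hψ0]
  have hmono : MonotoneOn q (Ioi (0:ℝ)) := by
    intro s hs t ht hst
    rw [hqslope s (ne_of_gt hs), hqslope t (ne_of_gt ht)]
    exact hconv.slope_mono (mem_univ 0) ⟨trivial, (ne_of_gt hs)⟩ ⟨trivial, (ne_of_gt ht)⟩ hst
  have hbdd : BddBelow (q '' Ioi (0:ℝ)) := by
    refine ⟨-‖b‖, ?_⟩
    rintro x ⟨t, ht, rfl⟩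
    have ht' : (0:ℝ) < t := ht
    have h1 : ‖a‖ - t * ‖b‖ ≤ ‖a + t • b‖ := by
      have h3 := norm_sub_le (a + t • b) (t • b)
      simp only [add_sub_cancel_right] at h3
      have h2 : ‖t • b‖ = t * ‖b‖ := by
        rw [norm_smul, Real.norm_eq_abs, abs_of_pos ht']
      linarith
    have he : -‖b‖ = (-(t * ‖b‖)) / t := by field_simp
    rw [he]
    exact (div_le_div_iff_of_pos_right ht').mpr (by linarith)
  exact ⟨_, hmono.tendsto_nhdsGT hbdd⟩

lemma normDecomp {K : Type*} {X : Type*} [NormedAddCommGroup X]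
    (k₀ : K) (u : lp (fun _ : K => X) ∞) :
    ‖u‖ = max ‖u k₀‖ (⨆ k : {k : K // k ≠ k₀}, ‖u k.1‖) := by
  have hb : ∀ k, ‖u k‖ ≤ ‖u‖ := fun k => lp.norm_apply_le_norm ENNReal.top_ne_zero u k
  apply le_antisymm
  · apply lp.norm_le_of_forall_le (le_max_of_le_left (norm_nonneg _))
    intro k
    by_cases hk : k = k₀
    · subst hk; exact le_max_left _ _
    · refine le_trans ?_ (le_max_right _ _)
      exact le_ciSup ⟨‖u‖, by rintro x ⟨k', rfl⟩; exact hb k'.1⟩ (⟨k, hk⟩ : {k : K // k ≠ k₀})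
  · exact max_le (hb k₀) (Real.iSup_le (fun k => hb k.1) (norm_nonneg u))

theorem stmt9 {K : Type*} [Nonempty K] {X : Type*}
    [NormedAddCommGroup X] [NormedSpace ℝ X] [CompleteSpace X]
    (f : lp (fun _ : K => X) ∞) (hf : ‖f‖ = 1) (k₀ : K)
    (h1 : ‖f k₀‖ = 1) (h2 : ∀ k : K, k ≠ k₀ → f k = 0)
    (h3 : ∀ y : X, rhoPlus (f k₀) y = 0 → rhoPlus y (f k₀) = 0) :
    ∀ g : lp (fun _ : K => X) ∞, rhoPlus f g = 0 → rhoPlus g f = 0 := by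
  intro g hg
  have hcoord : ∀ (s : lp (fun _ : K => X) ∞) (u : lp (fun _ : K => X) ∞) (t : ℝ) (k : K),
      (s + t • u) k = s k + t • u k := by
    intro s u t k
    simp
    rfl
  have hgk : ∀ k, ‖g k‖ ≤ ‖g‖ := fun k => lp.norm_apply_le_norm ENNReal.top_ne_zero g k
  -- Step 1 : norm equality near 0
  have hδpos : (0:ℝ) < 1 / (2 * (‖g‖ + 1)) := by positivity
  have key1 : ∀ t ∈ Ioo (0:ℝ) (1 / (2 * (‖g‖ + 1))), ‖f + t • g‖ = ‖f k₀ + t • g k₀‖ := by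
    intro t ht
    have ht0 : 0 < t := ht.1
    have hg1 : 0 ≤ ‖g‖ := norm_nonneg g
    have e2 : t * ‖g‖ < 1 / 2 := by
      have h4 : t * (‖g‖ + 1) < (1 / (2 * (‖g‖ + 1))) * (‖g‖ + 1) := by
        apply mul_lt_mul_of_pos_right ht.2; linarith
      have h5 : (1 / (2 * (‖g‖ + 1))) * (‖g‖ + 1) = 1 / 2 := by field_simp
      nlinarith
    have e3 : 1 - t * ‖g‖ ≤ ‖f k₀ + t • g k₀‖ := by
      have h6 := norm_sub_le (f k₀ + t • g k₀) (t • g k₀)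
      simp only [add_sub_cancel_right] at h6
      have h7 : ‖t • g k₀‖ = t * ‖g k₀‖ := by
        rw [norm_smul, Real.norm_eq_abs, abs_of_pos ht0]
      have h8 : t * ‖g k₀‖ ≤ t * ‖g‖ := mul_le_mul_of_nonneg_left (hgk k₀) ht0.le
      rw [h1] at h6
      linarith
    apply le_antisymm
    · apply lp.norm_le_of_forall_le (norm_nonneg _)
      intro k
      rw [hcoord f g t k]
      by_cases hk : k = k₀
      · subst hk; exact le_rfl
      · rw [h2 k hk, zero_add, norm_smul, Real.norm_eq_abs, abs_of_pos ht0]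
        have h9 : t * ‖g k‖ ≤ t * ‖g‖ := mul_le_mul_of_nonneg_left (hgk k) ht0.le
        linarith
    · rw [← hcoord f g t k₀]
      exact lp.norm_apply_le_norm ENNReal.top_ne_zero _ _
  have EV : (fun t : ℝ => (‖f + t • g‖ - 1) / t)
      =ᶠ[𝓝[>] (0:ℝ)] (fun t => (‖f k₀ + t • g k₀‖ - 1) / t) := by
    filter_upwards [Ioo_mem_nhdsGT_of_mem ⟨le_refl (0:ℝ), hδpos⟩] with t ht
    rw [key1 t ht]
  have hba : rhoPlus (f k₀) (g k₀) = 0 := by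
    simp only [rhoPlus, hf, h1, one_mul] at hg ⊢
    rwa [← limUnder_congr'' EV]
  have hab0 : rhoPlus (g k₀) (f k₀) = 0 := h3 (g k₀) hba
  -- Step 2
  set M : ℝ := ⨆ k : {k : K // k ≠ k₀}, ‖g k.1‖ with hMdef
  have hM0 : 0 ≤ M := Real.iSup_nonneg (fun k => norm_nonneg _)
  have hgdecomp : ‖g‖ = max ‖g k₀‖ M := normDecomp k₀ g
  have hgt : ∀ t : ℝ, ‖g + t • f‖ = max ‖g k₀ + t • f k₀‖ M := by
    intro t
    rw [normDecomp k₀ (g + t • f), hcoord g f t k₀, hMdef]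
    congr 1
    refine iSup_congr fun k => ?_
    rw [hcoord g f t k.1, h2 k.1 k.2, smul_zero, add_zero]
  rcases lt_or_ge ‖g k₀‖ M with hcM | hMc
  · -- sup elsewhere dominates: quotient eventually 0
    have EV2 : (fun t : ℝ => (‖g + t • f‖ - ‖g‖) / t) =ᶠ[𝓝[>] (0:ℝ)] (fun _ => (0:ℝ)) := by
      filter_upwards [Ioo_mem_nhdsGT_of_mem ⟨le_refl (0:ℝ), sub_pos.mpr hcM⟩] with t ht
      have hlt : ‖g k₀ + t • f k₀‖ < M := by
        have := norm_add_le (g k₀) (t • f k₀)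
        have h7 : ‖t • f k₀‖ = t * ‖f k₀‖ := by
          rw [norm_smul, Real.norm_eq_abs, abs_of_pos ht.1]
        rw [h7, h1, mul_one] at this
        have := ht.2
        simp only [mem_Ioo] at *
        linarith [norm_add_le (g k₀) (t • f k₀)]
      rw [hgt t, hgdecomp, max_eq_right hcM.le, max_eq_right hlt.le, sub_self, zero_div]
    unfold rhoPlus
    rw [limUnder_congr'' EV2, Filter.Tendsto.limUnder_eq tendsto_const_nhds, mul_zero]
  · by_cases ha : g k₀ = 0
    · have hgz : ‖g‖ = 0 := by
        rw [hgdecomp, ha, norm_zero]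
        rw [ha, norm_zero] at hMc
        simp [le_antisymm hMc hM0]
      unfold rhoPlus
      rw [hgz, zero_mul]
    · obtain ⟨L, hL⟩ := exists_tendsto_quot (g k₀) (f k₀)
      have hL0 : L = 0 := by
        unfold rhoPlus at hab0
        rw [Filter.Tendsto.limUnder_eq hL] at hab0
        exact (mul_eq_zero.mp hab0).resolve_left (norm_ne_zero_iff.mpr ha)
      rw [hL0] at hL
      have hnorm : ‖g‖ = ‖g k₀‖ := by rw [hgdecomp, max_eq_left hMc]
      have hub : Tendsto (fun t : ℝ => max ((‖g k₀ + t • f k₀‖ - ‖g k₀‖) / t) 0)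
          (𝓝[>] (0:ℝ)) (𝓝 0) := by
        have := hL.max (tendsto_const_nhds (x := (0:ℝ)) (f := 𝓝[>] (0:ℝ)))
        simpa using this
      have hq : Tendsto (fun t : ℝ => (‖g + t • f‖ - ‖g‖) / t) (𝓝[>] (0:ℝ)) (𝓝 0) := by
        refine tendsto_of_tendsto_of_tendsto_of_le_of_le' hL hub ?_ ?_
        · filter_upwards [self_mem_nhdsWithin] with t ht
          have ht0 : (0:ℝ) < t := ht
          rw [hgt t, hnorm]
          exact (div_le_div_iff_of_pos_right ht0).mpr
            (by linarith [le_max_left ‖g k₀ + t • f k₀‖ M])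
        · filter_upwards [self_mem_nhdsWithin] with t ht
          have ht0 : (0:ℝ) < t := ht
          rw [hgt t, hnorm]
          have step1 : max ‖g k₀ + t • f k₀‖ M ≤ max ‖g k₀ + t • f k₀‖ ‖g k₀‖ :=
            max_le_max le_rfl hMc
          have step2 : (max ‖g k₀ + t • f k₀‖ ‖g k₀‖ - ‖g k₀‖) / t
              = max ((‖g k₀ + t • f k₀‖ - ‖g k₀‖) / t) 0 := by
            rw [← max_sub_sub_right, sub_self, ← max_div_div_right ht0.le, zero_div]
          rw [← step2]
          exact (div_le_div_iff_of_pos_right ht0).mpr (by linarith)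
      unfold rhoPlus
      rw [Filter.Tendsto.limUnder_eq hq, mul_zero]
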